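/- Let μ be a free P₀-measure on ℕ and ν a free measure with ν ≤_RK μ. Then ν ≤_RB μ. Moreover, if μ is a P-measure (respectively, a P₀-measure) and ν ≤_RB μ, then ν is a P-measure (respectively, a P₀-measure). -/

import Mathlib

open Filter

/-- A finitely additive probability measure defined on all subsets of `ℕ`. -/
def IsMeasure (μ : Set ℕ → ℝ) : Prop :=
  (∀ A : Set ℕ, 0 ≤ μ A ∧ μ A ≤ 1) ∧ μ Set.univ = 1 ∧
    ∀ A B : Set ℕ, Disjoint A B → μ (A ∪ B) = μ A + μ B

/-- A measure is free if it vanishes on finite sets. -/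
def IsFree (μ : Set ℕ → ℝ) : Prop := ∀ A : Set ℕ, A.Finite → μ A = 0

/-- A function is finite-to-one if all fibers are finite. -/
def FinToOne (f : ℕ → ℕ) : Prop := ∀ n : ℕ, (f ⁻¹' {n}).Finite

/-- Rudin-Blass reducibility: `ν ≤_RB μ` via a finite-to-one map. -/
def RBLe (ν μ : Set ℕ → ℝ) : Prop :=
  ∃ f : ℕ → ℕ, FinToOne f ∧ ∀ A : Set ℕ, μ (f ⁻¹' A) = ν A

/-- Rudin-Keisler reducibility: `ν ≤_RK μ`. -/
def RKLe (ν μ : Set ℕ → ℝ) : Prop :=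
  ∃ f : ℕ → ℕ, ∀ A : Set ℕ, μ (f ⁻¹' A) = ν A

/-- A measure is shift invariant if `μ(A + 1) = μ(A)`. -/
def ShiftInvariant (μ : Set ℕ → ℝ) : Prop :=
  ∀ A : Set ℕ, μ ((fun n => n + 1) '' A) = μ A

/-- A measure extends the asymptotic density. -/
def ExtendsDensity (μ : Set ℕ → ℝ) : Prop :=
  ∀ (A : Set ℕ) (d : ℝ),
    Tendsto (fun n : ℕ => ((A ∩ Set.Iio n).ncard : ℝ) / n) atTop (nhds d) → μ A = d

/-- A partition of `ℕ` indexed by `ℕ`. -/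
def IsPartition (A : ℕ → Set ℕ) : Prop :=
  Pairwise (Function.onFun Disjoint A) ∧ (⋃ n, A n) = Set.univ

/-- A selector of a partition: meets each piece in at most one point. -/
def IsSelector (S : Set ℕ) (A : ℕ → Set ℕ) : Prop :=
  ∀ n : ℕ, (S ∩ A n).Subsingleton

/-- A Q-measure: each partition into finite sets has a selector of full measure. -/
def IsQMeasure (μ : Set ℕ → ℝ) : Prop :=
  ∀ A : ℕ → Set ℕ, IsPartition A → (∀ n, (A n).Finite) →
    ∃ S : Set ℕ, IsSelector S A ∧ μ S = 1

/-- A Q⁺-measure: each partition into finite sets has a selector of positive measure. -/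
def IsQPlusMeasure (μ : Set ℕ → ℝ) : Prop :=
  ∀ A : ℕ → Set ℕ, IsPartition A → (∀ n, (A n).Finite) →
    ∃ S : Set ℕ, IsSelector S A ∧ 0 < μ S

/-- A P-measure: each partition has a pseudo-selector of the largest possible measure. -/
def IsPMeasure (μ : Set ℕ → ℝ) : Prop :=
  ∀ A : ℕ → Set ℕ, IsPartition A →
    ∃ S : Set ℕ, (∀ n, (S ∩ A n).Finite) ∧ μ S = 1 - ∑' n, μ (A n)

/-- A selective measure: each partition has a selector of the largest possible measure. -/
def IsSelectiveMeasure (μ : Set ℕ → ℝ) : Prop :=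
  ∀ A : ℕ → Set ℕ, IsPartition A →
    ∃ S : Set ℕ, IsSelector S A ∧ μ S = 1 - ∑' n, μ (A n)

/-- A non-atomic measure: finite partitions into pieces of arbitrarily small measure. -/
def NonAtomic (μ : Set ℕ → ℝ) : Prop :=
  ∀ ε : ℝ, 0 < ε → ∃ (N : ℕ) (P : Fin N → Set ℕ),
    Pairwise (Function.onFun Disjoint P) ∧ (⋃ i, P i) = Set.univ ∧ ∀ i, μ (P i) < ε

/-- The continuum hypothesis: `2 ^ ℵ₀ = ℵ₁`. -/
def CH : Prop := (2 : Cardinal.{0}) ^ Cardinal.aleph0.{0} = Cardinal.aleph.{0} 1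


/-- A P₀-measure: every decreasing sequence of measure-one sets has a measure-one
pseudo-intersection. -/
def IsP0Measure (μ : Set ℕ → ℝ) : Prop :=
  ∀ A : ℕ → Set ℕ, (∀ n, A (n + 1) ⊆ A n) → (∀ n, μ (A n) = 1) →
    ∃ P : Set ℕ, (∀ n, (P \ A n).Finite) ∧ μ P = 1

section Helpers

variable {μ : Set ℕ → ℝ}

lemma mea_nonneg (h : IsMeasure μ) (A : Set ℕ) : 0 ≤ μ A := (h.1 A).1

lemma mea_empty (h : IsMeasure μ) : μ ∅ = 0 := by
  have := h.2.2 ∅ ∅ (by simp)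
  simp at this; linarith

lemma mea_mono (h : IsMeasure μ) {A B : Set ℕ} (hAB : A ⊆ B) : μ A ≤ μ B := by
  have hd : Disjoint A (B \ A) := Set.disjoint_sdiff_right
  have hu : A ∪ B \ A = B := Set.union_diff_cancel hAB
  have := h.2.2 A (B \ A) hd
  rw [hu] at this
  have := mea_nonneg h (B \ A)
  linarith

lemma mea_compl (h : IsMeasure μ) (A : Set ℕ) : μ Aᶜ = 1 - μ A := by
  have := h.2.2 A Aᶜ disjoint_compl_right
  rw [Set.union_compl_self, h.2.1] at this
  linarith

lemma mea_split (h : IsMeasure μ) (X P : Set ℕ) : μ X = μ (X ∩ P) + μ (X \ P) := by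
  have hd : Disjoint (X ∩ P) (X \ P) := Set.disjoint_sdiff_right.mono_left Set.inter_subset_right
  have hu : (X ∩ P) ∪ (X \ P) = X := Set.inter_union_diff X P
  have h2 := h.2.2 _ _ hd
  rw [hu] at h2
  exact h2

lemma mea_diff_full (h : IsMeasure μ) {P : Set ℕ} (hP : μ P = 1) (X : Set ℕ) :
    μ (X \ P) = 0 := by
  have h1 : X \ P ⊆ Pᶜ := fun x hx => hx.2
  have h2 := mea_mono h h1
  rw [mea_compl h, hP] at h2
  have := mea_nonneg h (X \ P)
  linarith

lemma mea_inter_full (h : IsMeasure μ) {P : Set ℕ} (hP : μ P = 1) (X : Set ℕ) :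
    μ (X ∩ P) = μ X := by
  have := mea_split h X P
  rw [mea_diff_full h hP] at this
  linarith

lemma mea_finsum (h : IsMeasure μ) (A : ℕ → Set ℕ) (hd : Pairwise (Function.onFun Disjoint A)) :
    ∀ k, μ (⋃ n ∈ Finset.range k, A n) = ∑ n ∈ Finset.range k, μ (A n) := by
  intro k
  induction k with
  | zero => simp [mea_empty h]
  | succ k ih =>
      have hdisj : Disjoint (⋃ n ∈ Finset.range k, A n) (A k) := by
        simp only [Set.disjoint_iUnion_left]
        intro i hi
        exact hd (by simp at hi; omega : i ≠ k)
      rw [Finset.range_add_one, Finset.set_biUnion_insert, Set.union_comm, h.2.2 _ _ hdisj, ih,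
        Finset.sum_insert (by simp)]
      ring

end Helpers

/-- Below a P₀-measure, `≤_RK` collapses to `≤_RB`; moreover the properties of being
a P-measure and of being a P₀-measure are RB-hereditary. -/


theorem stmt_14 :
    (∀ μ ν : Set ℕ → ℝ, IsMeasure μ → IsFree μ → IsP0Measure μ →
      IsMeasure ν → IsFree ν → RKLe ν μ → RBLe ν μ) ∧
    (∀ μ ν : Set ℕ → ℝ, IsMeasure μ → IsFree μ → IsPMeasure μ →
      IsMeasure ν → IsFree ν → RBLe ν μ → IsPMeasure ν) ∧
    (∀ μ ν : Set ℕ → ℝ, IsMeasure μ → IsFree μ → IsP0Measure μ →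
      IsMeasure ν → IsFree ν → RBLe ν μ → IsP0Measure ν) := by
  refine ⟨?_, ?_, ?_⟩
  · -- RK collapses to RB below a P₀-measure
    rintro μ ν hμ hμf hμP0 hν hνf ⟨f, hf⟩
    set A : ℕ → Set ℕ := fun n => f ⁻¹' (Set.Ici n) with hA
    have hdec : ∀ n, A (n + 1) ⊆ A n := fun n x hx => le_trans (Nat.le_succ n) hx
    have hone : ∀ n, μ (A n) = 1 := by
      intro n
      have h1 : ν (Set.Ici n) = 1 := by
        have he : (Set.Ici n : Set ℕ) = (Set.Iio n)ᶜ := by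
          ext x; simp [Set.mem_Ici, Set.mem_Iio, Nat.not_lt]
        rw [he, mea_compl hν, hνf _ (Set.finite_Iio n)]; ring
      rw [hA]; simpa using (hf (Set.Ici n)).trans h1
    obtain ⟨P, hPfin, hP⟩ := hμP0 A hdec hone
    classical
    refine ⟨fun m => if m ∈ P then f m else m, ?_, ?_⟩
    · intro k
      apply Set.Finite.subset ((hPfin (k + 1)).union (Set.finite_singleton k))
      intro m hm
      simp only [Set.mem_preimage, Set.mem_singleton_iff] at hm
      by_cases hmP : m ∈ P
      · rw [if_pos hmP] at hm
        left
        refine ⟨hmP, ?_⟩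
        simp only [hA, Set.mem_preimage, Set.mem_Ici, hm]
        omega
      · rw [if_neg hmP] at hm
        right; exact hm
    · intro C
      have key : (fun m => if m ∈ P then f m else m) ⁻¹' C ∩ P = f ⁻¹' C ∩ P := by
        ext m
        simp only [Set.mem_inter_iff, Set.mem_preimage]
        constructor
        · rintro ⟨hm, hmP⟩; rw [if_pos hmP] at hm; exact ⟨hm, hmP⟩
        · rintro ⟨hm, hmP⟩; exact ⟨by rw [if_pos hmP]; exact hm, hmP⟩
      rw [← mea_inter_full hμ hP, key, mea_inter_full hμ hP, hf]
  · -- being a P-measure is RB-hereditary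
    rintro μ ν hμ hμf hμP hν hνf ⟨f, hfto, hf⟩ B hB
    set A : ℕ → Set ℕ := fun n => f ⁻¹' (B n) with hA
    have hApart : IsPartition A := by
      constructor
      · intro i j hij
        exact (hB.1 hij).preimage f
      · rw [hA]
        simp only [← Set.preimage_iUnion, hB.2, Set.preimage_univ]
    obtain ⟨S, hSfin, hSmeas⟩ := hμP A hApart
    have htsum : ∑' n, μ (A n) = ∑' n, ν (B n) := tsum_congr fun n => hf (B n)
    have hTfin : ∀ n, ((f '' S) ∩ B n).Finite := by
      intro n
      apply Set.Finite.subset ((hSfin n).image f)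
      rintro q ⟨⟨s, hs, rfl⟩, hq⟩
      exact ⟨s, ⟨hs, hq⟩, rfl⟩
    refine ⟨f '' S, hTfin, le_antisymm ?_ ?_⟩
    · -- upper bound
      have hsummable : Summable (fun n => ν (B n)) := by
        apply summable_of_sum_range_le (fun n => mea_nonneg hν (B n))
        intro k
        rw [← mea_finsum hν B hB.1 k]
        have h2 := mea_mono hν (Set.subset_univ (⋃ n ∈ Finset.range k, B n))
        rw [hν.2.1] at h2; exact h2
      have htend : Tendsto (fun k => 1 - ∑ n ∈ Finset.range k, ν (B n)) atTop
          (nhds (1 - ∑' n, ν (B n))) :=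
        tendsto_const_nhds.sub hsummable.hasSum.tendsto_sum_nat
      refine ge_of_tendsto' htend fun k => ?_
      set U : Set ℕ := ⋃ n ∈ Finset.range k, B n with hU
      have hfin : ((f '' S) ∩ U).Finite := by
        have he : (f '' S) ∩ U = ⋃ n ∈ Finset.range k, ((f '' S) ∩ B n) := by
          rw [hU, Set.inter_iUnion₂]
        rw [he]
        exact Set.Finite.biUnion (Finset.range k).finite_toSet fun n _ => hTfin n
      have h0 : ν ((f '' S) ∩ U) = 0 := hνf _ hfin
      have h1 : ν ((f '' S) \ U) ≤ ν Uᶜ := mea_mono hν fun x hx => hx.2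
      have h2 : ν Uᶜ = 1 - ∑ n ∈ Finset.range k, ν (B n) := by
        rw [mea_compl hν, mea_finsum hν B hB.1 k]
      have h3 := mea_split hν (f '' S) U
      linarith
    · -- lower bound
      rw [← hf]
      calc 1 - ∑' n, ν (B n) = μ S := by rw [hSmeas, htsum]
        _ ≤ μ (f ⁻¹' (f '' S)) := mea_mono hμ (Set.subset_preimage_image f S)
  · -- being a P₀-measure is RB-hereditary
    rintro μ ν hμ hμf hμP0 hν hνf ⟨f, hfto, hf⟩ B hBdec hBone
    set A : ℕ → Set ℕ := fun n => f ⁻¹' (B n) with hA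
    have hdec : ∀ n, A (n + 1) ⊆ A n := fun n x hx => hBdec n hx
    have hone : ∀ n, μ (A n) = 1 := fun n => (hf (B n)).trans (hBone n)
    obtain ⟨P, hPfin, hP⟩ := hμP0 A hdec hone
    refine ⟨f '' P, ?_, ?_⟩
    · intro n
      apply Set.Finite.subset ((hPfin n).image f)
      rintro q ⟨⟨p, hp, rfl⟩, hq⟩
      exact ⟨p, ⟨hp, hq⟩, rfl⟩
    · have h1 : μ P ≤ μ (f ⁻¹' (f '' P)) := mea_mono hμ (Set.subset_preimage_image f P)
      have h2 : μ (f ⁻¹' (f '' P)) ≤ 1 := (hμ.1 _).2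
      rw [← hf]
      rw [hP] at h1
      linarith
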